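/- For an arbitrary path-connected Hausdorff space X, cat(X) ≤ TC(X) ≤ cat(X × X). -/

import Mathlib

open Set unitInterval Topology

/-- A point `x` of a topological space `X` is a *wild point* of `X` if every neighborhood `U`
of `x` contains a loop that is not null-homotopic in `X`. -/
def IsWildPoint {X : Type*} [TopologicalSpace X] (x : X) : Prop :=
  ∀ U ∈ 𝓝 x, ∃ (y : X) (γ : Path y y), Set.range ⇑γ ⊆ U ∧ ¬ γ.Homotopic (Path.refl y)

/-- The set of wild points of `X`. -/
def wildSet (X : Type*) [TopologicalSpace X] : Set X := {x | IsWildPoint x}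

/-- Iterated wild sets: `iterWild X 0 = X` and `iterWild X (n+1) = w(iterWild X n)`,
where the wild set of the subspace is taken with the subspace topology. -/
def iterWild (X : Type*) [TopologicalSpace X] : ℕ → Set X
  | 0 => Set.univ
  | n + 1 => Subtype.val '' wildSet ↥(iterWild X n)

/-- The wildness rank of `X`: the least `n` with `iterWild X n = ∅`, and `⊤` if none exists. -/
noncomputable def wildRank (X : Type*) [TopologicalSpace X] : ℕ∞ :=
  sInf ((↑) '' {n : ℕ | iterWild X n = ∅})

/-- `X` is `w`-stable if every iterated wild set is locally path-connected. -/
def WStable (X : Type*) [TopologicalSpace X] : Prop :=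
  ∀ n : ℕ, LocPathConnectedSpace ↥(iterWild X n)

/-- `X` has Lebesgue covering dimension at most one: every open cover admits an open
refinement which covers `X` and in which every point lies in at most two members. -/
def DimLEOne (X : Type*) [TopologicalSpace X] : Prop :=
  ∀ 𝒰 : Set (Set X), (∀ U ∈ 𝒰, IsOpen U) → ⋃₀ 𝒰 = Set.univ →
    ∃ 𝒱 : Set (Set X), (∀ V ∈ 𝒱, IsOpen V) ∧ ⋃₀ 𝒱 = Set.univ ∧
      (∀ V ∈ 𝒱, ∃ U ∈ 𝒰, V ⊆ U) ∧
      ∀ x : X, ∃ V₁ V₂ : Set X, ∀ V ∈ 𝒱, x ∈ V → V = V₁ ∨ V = V₂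

/-- A subset `A ⊆ X` is categorical in `X` if the inclusion `A → X` is homotopic to a
constant map. -/
def IsCategorical (X : Type*) [TopologicalSpace X] (A : Set X) : Prop :=
  ∃ y : X, ContinuousMap.Homotopic
    (⟨Subtype.val, continuous_subtype_val⟩ : C(↥A, X)) (ContinuousMap.const ↥A y)

/-- `A ⊆ X × X` admits a motion plan in `X` if the two coordinate projections `A → X`
are homotopic. -/
def AdmitsMotionPlan (X : Type*) [TopologicalSpace X] (A : Set (X × X)) : Prop :=
  ContinuousMap.Homotopic
    (⟨fun p : A => (p : X × X).1, continuous_fst.comp continuous_subtype_val⟩ : C(↥A, X))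
    (⟨fun p : A => (p : X × X).2, continuous_snd.comp continuous_subtype_val⟩ : C(↥A, X))

/-- The normalized Lusternik–Schnirelmann category of `X`, defined via closed filtrations
`∅ = F₋₁ ⊆ F 0 ⊆ ⋯ ⊆ F n = X` with categorical differences. -/
noncomputable def LSCat (X : Type*) [TopologicalSpace X] : ℕ∞ :=
  sInf ((↑) '' {n : ℕ | ∃ F : ℕ → Set X, Monotone F ∧ (∀ j, IsClosed (F j)) ∧
    F n = Set.univ ∧ IsCategorical X (F 0) ∧ ∀ j < n, IsCategorical X (F (j + 1) \ F j)})

/-- The normalized topological complexity of `X`, defined via closed filtrations of `X × X`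
whose differences admit motion plans. -/
noncomputable def TopComplexity (X : Type*) [TopologicalSpace X] : ℕ∞ :=
  sInf ((↑) '' {n : ℕ | ∃ F : ℕ → Set (X × X), Monotone F ∧ (∀ j, IsClosed (F j)) ∧
    F n = Set.univ ∧ AdmitsMotionPlan X (F 0) ∧ ∀ j < n, AdmitsMotionPlan X (F (j + 1) \ F j)})

/-- The relative LS-category `cat_X(A)` defined via filtrations of `A` by subsets closed in `A`
whose differences are categorical in `X`. -/
noncomputable def relCat (X : Type*) [TopologicalSpace X] (A : Set X) : ℕ∞ :=
  sInf ((↑) '' {n : ℕ | ∃ F : ℕ → Set X, Monotone F ∧ (∀ j, F j ⊆ A) ∧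
    (∀ j, IsClosed ((Subtype.val ⁻¹' F j : Set ↥A))) ∧ F n = A ∧
    IsCategorical X (F 0) ∧ ∀ j < n, IsCategorical X (F (j + 1) \ F j)})

/-- A simple closed curve in `X` is a subspace homeomorphic to the circle. -/
def IsSimpleClosedCurve {X : Type*} [TopologicalSpace X] (S : Set X) : Prop :=
  Nonempty (↥S ≃ₜ Circle)

/-- A continuous map is `π₁`-injective if every based loop whose image is null-homotopic is
itself null-homotopic (equivalently, the induced homomorphism on fundamental groups is
injective at every basepoint). -/
def Pi1Injective {X Y : Type*} [TopologicalSpace X] [TopologicalSpace Y] (f : C(X, Y)) : Prop :=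
  ∀ (x : X) (γ : Path x x), (γ.map f.continuous).Homotopic (Path.refl (f x)) →
    γ.Homotopic (Path.refl x)


lemma cat_to_plan {X : Type*} [TopologicalSpace X] [PathConnectedSpace X] (A : Set (X × X))
    (h : IsCategorical (X × X) A) : AdmitsMotionPlan X A := by
  obtain ⟨y, h⟩ := h
  have h1 := ContinuousMap.Homotopic.comp (ContinuousMap.Homotopic.refl (⟨Prod.fst, continuous_fst⟩ : C(X × X, X))) h
  have h2 := ContinuousMap.Homotopic.comp (ContinuousMap.Homotopic.refl (⟨Prod.snd, continuous_snd⟩ : C(X × X, X))) h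
  obtain ⟨p⟩ := PathConnectedSpace.joined y.1 y.2
  have hc : (ContinuousMap.const ↥A y.1).Homotopic (ContinuousMap.const ↥A y.2) :=
    ⟨p.toHomotopyConst⟩
  exact (ContinuousMap.Homotopic.trans (ContinuousMap.Homotopic.trans h1 hc) (ContinuousMap.Homotopic.symm h2))

lemma plan_to_cat {X : Type*} [TopologicalSpace X] (x₀ : X) (A : Set (X × X))
    (h : AdmitsMotionPlan X A) : IsCategorical X ((fun x => (x, x₀)) ⁻¹' A) := by
  refine ⟨x₀, ?_⟩
  set B : Set X := (fun x => (x, x₀)) ⁻¹' A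
  have hg : Continuous fun z : ↥B => (⟨(z.1, x₀), z.2⟩ : ↥A) :=
    Continuous.subtype_mk (continuous_subtype_val.prodMk continuous_const) _
  exact ContinuousMap.Homotopic.comp h (ContinuousMap.Homotopic.refl (⟨_, hg⟩ : C(↥B, ↥A)))

/-- `cat(X) ≤ TC(X) ≤ cat(X × X)` for a path-connected Hausdorff space `X`. -/
theorem lscat_le_tc_le_lscat_prod (X : Type*) [TopologicalSpace X] [T2Space X]
    [PathConnectedSpace X] :
    LSCat X ≤ TopComplexity X ∧ TopComplexity X ≤ LSCat (X × X) := by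
  constructor
  · apply sInf_le_sInf
    apply Set.image_mono
    rintro n ⟨F, hmono, hcl, hn, h0, hj⟩
    have x₀ : X := Classical.arbitrary X
    refine ⟨fun j => (fun x => (x, x₀)) ⁻¹' F j, fun a b hab => Set.preimage_mono (hmono hab),
      fun j => (hcl j).preimage (continuous_id.prodMk continuous_const), by simp only [hn, Set.preimage_univ],
      plan_to_cat x₀ _ h0, fun j hjn => ?_⟩
    rw [← Set.preimage_diff]
    exact plan_to_cat x₀ _ (hj j hjn)
  · apply sInf_le_sInf
    apply Set.image_mono
    rintro n ⟨F, hmono, hcl, hn, h0, hj⟩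
    exact ⟨F, hmono, hcl, hn, cat_to_plan _ h0, fun j hjn => cat_to_plan _ (hj j hjn)⟩
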